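/- For every n ≥ 0, the coefficient f_n of x^n in F(x,q) satisfies f_n = ∑_{t=0}^{⌊n/2⌋} q^{(n−2t)(n−2t+1)/2 + t(t+1)} / ((q;q)_{n−2t} (q;q)_t). -/

import Mathlib

open Finset PowerSeries

/-- `(q;q)_n = ∏_{0 ≤ j < n} (1 - q^{j+1})`. -/
noncomputable def qPoch (n : ℕ) : PowerSeries ℚ :=
  ∏ j ∈ Finset.range n, (1 - (PowerSeries.X : PowerSeries ℚ) ^ (j + 1))

/-- The power series `q` in `ℚ⟦q⟧`. -/
noncomputable def qq : PowerSeries ℚ := PowerSeries.X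

/-- `G(x,q) = ∑_{s ≥ 0} q^{s(s+1)} x^{2s} / (q;q)_s`, as an element of `ℚ⟦q⟧⟦x⟧`:
the coefficient of `x^n` is `q^{s(s+1)}/(q;q)_s` if `n = 2s`, and `0` otherwise. -/
noncomputable def Gser : PowerSeries (PowerSeries ℚ) :=
  PowerSeries.mk fun n =>
    if 2 ∣ n then qq ^ ((n / 2) * (n / 2 + 1)) * (qPoch (n / 2))⁻¹ else 0

/-- The coefficient `f_n` of `x^n` in
`F(x,q) = ∑_{s,t,u ≥ 0} q^{s(s+1)/2 + t(t+1) + 3u(u+1)/2 + st + su + 2tu}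
  x^{s+2t+3u}/((q;q)_s (q;q)_t (q;q)_u)`,
i.e. the (finite) sum over `s, t, u ≥ 0` with `s + 2t + 3u = n`. -/
noncomputable def fcoef (n : ℕ) : PowerSeries ℚ :=
  ∑ t ∈ Finset.range (n / 2 + 1), ∑ u ∈ Finset.range (n / 3 + 1),
    if 2 * t + 3 * u ≤ n then
      qq ^ ((n - 2 * t - 3 * u) * (n - 2 * t - 3 * u + 1) / 2 + t * (t + 1) +
            3 * (u * (u + 1) / 2) + (n - 2 * t - 3 * u) * t +
            (n - 2 * t - 3 * u) * u + 2 * t * u) *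
        (qPoch (n - 2 * t - 3 * u))⁻¹ * (qPoch t)⁻¹ * (qPoch u)⁻¹
    else 0

/-- `F(x,q)` as an element of `ℚ⟦q⟧⟦x⟧`. -/
noncomputable def Fser : PowerSeries (PowerSeries ℚ) :=
  PowerSeries.mk fcoef

lemma constCoeff_qPoch (n : ℕ) : constantCoeff (qPoch n) = 1 := by
  unfold qPoch
  rw [map_prod]
  exact Finset.prod_eq_one fun j _ => by simp

lemma qPoch_ne_zero (n : ℕ) : qPoch n ≠ 0 := fun h => by
  have := constCoeff_qPoch n; rw [h] at this; simp at this

lemma qPoch_mul_inv (n : ℕ) : qPoch n * (qPoch n)⁻¹ = 1 :=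
  PowerSeries.mul_inv_cancel _ (by rw [constCoeff_qPoch]; exact one_ne_zero)

lemma qPoch_zero : qPoch 0 = 1 := by simp [qPoch]

lemma ps_one_inv : (1 : PowerSeries ℚ)⁻¹ = 1 := by
  have h := PowerSeries.mul_inv_cancel (1 : PowerSeries ℚ) (by simp)
  simpa using h

lemma qPoch_zero_inv : (qPoch 0)⁻¹ = 1 := by rw [qPoch_zero, ps_one_inv]

lemma qPoch_succ (k : ℕ) : qPoch (k + 1) = qPoch k * (1 - PowerSeries.X ^ (k + 1)) := by
  simp [qPoch, Finset.prod_range_succ]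

lemma one_sub_mul_inv (k : ℕ) :
    (1 - (PowerSeries.X : PowerSeries ℚ) ^ (k + 1)) * (qPoch (k + 1))⁻¹ = (qPoch k)⁻¹ := by
  apply mul_right_cancel₀ (qPoch_ne_zero k)
  calc (1 - (PowerSeries.X : PowerSeries ℚ) ^ (k + 1)) * (qPoch (k + 1))⁻¹ * qPoch k
      = qPoch (k+1) * (qPoch (k+1))⁻¹ := by rw [qPoch_succ]; ring
    _ = (qPoch k)⁻¹ * qPoch k := by rw [qPoch_mul_inv, mul_comm, qPoch_mul_inv]

lemma X_pow_mul_inv_add (k : ℕ) :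
    (PowerSeries.X : PowerSeries ℚ) ^ (k+1) * (qPoch (k+1))⁻¹ + (qPoch k)⁻¹ = (qPoch (k+1))⁻¹ := by
  calc (PowerSeries.X : PowerSeries ℚ) ^ (k+1) * (qPoch (k+1))⁻¹ + (qPoch k)⁻¹
      = (PowerSeries.X : PowerSeries ℚ) ^ (k+1) * (qPoch (k+1))⁻¹
        + (1 - (PowerSeries.X : PowerSeries ℚ) ^ (k + 1)) * (qPoch (k + 1))⁻¹ := by
        rw [one_sub_mul_inv]
    _ = (qPoch (k+1))⁻¹ := by ring

/-- Durfee rectangle identity (cleared form), for `T ≤ s`. -/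
lemma durfee_cleared (T : ℕ) : ∀ s : ℕ, T ≤ s →
    (∑ u ∈ range (T + 1),
      qq ^ ((s - u) * (T - u)) * (qPoch (s - u))⁻¹ * (qPoch (T - u))⁻¹ * (qPoch u)⁻¹)
      * (qPoch s * qPoch T) = 1 := by
  induction T with
  | zero =>
    intro s _
    rw [show (0:ℕ) + 1 = 1 from rfl, Finset.sum_range_one]
    simp only [Nat.sub_zero, Nat.mul_zero, pow_zero, qPoch_zero, qPoch_zero_inv, ps_one_inv,
      mul_one, one_mul]
    exact PowerSeries.inv_mul_cancel _ (by rw [constCoeff_qPoch]; exact one_ne_zero)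
  | succ T ih =>
    intro s hs
    have hTs : T ≤ s := le_trans (Nat.le_succ T) hs
    set X' : PowerSeries ℚ := PowerSeries.X with hX'
    have hq : qq = X' := rfl
    have key : (∑ u ∈ range (T + 1 + 1),
        qq ^ ((s - u) * (T + 1 - u)) * (qPoch (s - u))⁻¹ * (qPoch (T + 1 - u))⁻¹ * (qPoch u)⁻¹)
        * qPoch (T + 1)
        = (∑ u ∈ range (T + 1),
        qq ^ ((s - u) * (T - u)) * (qPoch (s - u))⁻¹ * (qPoch (T - u))⁻¹ * (qPoch u)⁻¹)
        * qPoch T := by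
      rw [Finset.sum_mul, Finset.sum_mul]
      have hsplit : ∀ u ∈ range (T + 1 + 1),
          qq ^ ((s - u) * (T + 1 - u)) * (qPoch (s - u))⁻¹ * (qPoch (T + 1 - u))⁻¹ * (qPoch u)⁻¹
            * qPoch (T + 1)
          = (qq ^ ((s - u) * (T + 1 - u)) * (qPoch (s - u))⁻¹ *
              ((1 - X' ^ (T + 1 - u)) * (qPoch (T + 1 - u))⁻¹) * (qPoch u)⁻¹) * qPoch T
          + (qq ^ ((s - u) * (T + 1 - u) + (T + 1 - u)) * (qPoch (s - u))⁻¹ *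
              (qPoch (T + 1 - u))⁻¹ * ((1 - X' ^ u) * (qPoch u)⁻¹)) * qPoch T := by
        intro u hu
        rw [Finset.mem_range] at hu
        have hpow : X' ^ (T + 1 - u) * X' ^ u = X' ^ (T + 1) := by
          rw [← pow_add]; congr 1; omega
        have hsub : (1 : PowerSeries ℚ) - X' ^ (T + 1)
            = (1 - X' ^ (T + 1 - u)) + X' ^ (T + 1 - u) * (1 - X' ^ u) := by
          rw [mul_one_sub, hpow]; ring
        rw [qPoch_succ T, hsub, pow_add qq ((s - u) * (T + 1 - u)) (T + 1 - u), hq]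
        ring
      rw [Finset.sum_congr rfl hsplit, Finset.sum_add_distrib]
      -- A part: last term vanishes
      have hA : (∑ u ∈ range (T + 1 + 1),
          (qq ^ ((s - u) * (T + 1 - u)) * (qPoch (s - u))⁻¹ *
            ((1 - X' ^ (T + 1 - u)) * (qPoch (T + 1 - u))⁻¹) * (qPoch u)⁻¹) * qPoch T)
          = ∑ u ∈ range (T + 1),
          (qq ^ ((s - u) * (T - u) + (s - u)) * (qPoch (s - u))⁻¹ *
            (qPoch (T - u))⁻¹ * (qPoch u)⁻¹) * qPoch T := by
        rw [Finset.sum_range_succ]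
        have hz : (1 - X' ^ (T + 1 - (T + 1))) = 0 := by simp
        rw [hz]
        simp only [zero_mul, mul_zero, add_zero]
        apply Finset.sum_congr rfl
        intro u hu
        rw [Finset.mem_range] at hu
        have h2 : (s - u) * (T + 1 - u) = (s - u) * (T - u) + (s - u) := by
          have h1 : T + 1 - u = (T - u) + 1 := by omega
          rw [h1, Nat.mul_succ]
        have h1 : T + 1 - u = (T - u) + 1 := by omega
        rw [h2, h1, one_sub_mul_inv (T - u)]
      -- B part: first term vanishes, shift
      have hB : (∑ u ∈ range (T + 1 + 1),
          (qq ^ ((s - u) * (T + 1 - u) + (T + 1 - u)) * (qPoch (s - u))⁻¹ *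
            (qPoch (T + 1 - u))⁻¹ * ((1 - X' ^ u) * (qPoch u)⁻¹)) * qPoch T)
          = ∑ u ∈ range (T + 1),
          (qq ^ ((s - u) * (T - u)) * (qPoch (s - u - 1))⁻¹ *
            (qPoch (T - u))⁻¹ * (qPoch u)⁻¹) * qPoch T := by
        rw [Finset.sum_range_succ']
        have hz : (1 - X' ^ (0:ℕ)) = 0 := by simp
        rw [hz]
        simp only [zero_mul, mul_zero, add_zero]
        apply Finset.sum_congr rfl
        intro u hu
        rw [Finset.mem_range] at hu
        have h1 : T + 1 - (u + 1) = T - u := by omega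
        have h2 : s - (u + 1) = s - u - 1 := by omega
        rw [h1, h2]
        have h3 : (s - u - 1) * (T - u) + (T - u) = (s - u) * (T - u) := by
          have hk : s - u - 1 + 1 = s - u := by omega
          calc (s - u - 1) * (T - u) + (T - u) = (s - u - 1 + 1) * (T - u) := by ring
            _ = (s - u) * (T - u) := by rw [hk]
        rw [h3, one_sub_mul_inv u]
      rw [hA, hB, ← Finset.sum_add_distrib]
      apply Finset.sum_congr rfl
      intro u hu
      rw [Finset.mem_range] at hu
      have hk : s - u - 1 + 1 = s - u := by omega
      have hthis := X_pow_mul_inv_add (s - u - 1)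
      rw [hk] at hthis
      have hfin : qq ^ ((s - u) * (T - u) + (s - u)) * (qPoch (s - u))⁻¹
          + qq ^ ((s - u) * (T - u)) * (qPoch (s - u - 1))⁻¹
          = qq ^ ((s - u) * (T - u)) * (qPoch (s - u))⁻¹ := by
        calc qq ^ ((s - u) * (T - u) + (s - u)) * (qPoch (s - u))⁻¹
              + qq ^ ((s - u) * (T - u)) * (qPoch (s - u - 1))⁻¹
            = qq ^ ((s - u) * (T - u)) *
              (X' ^ (s - u) * (qPoch (s - u))⁻¹ + (qPoch (s - u - 1))⁻¹) := by
              rw [pow_add, hq]; ring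
          _ = qq ^ ((s - u) * (T - u)) * (qPoch (s - u))⁻¹ := by rw [hthis]
      calc (qq ^ ((s - u) * (T - u) + (s - u)) * (qPoch (s - u))⁻¹ * (qPoch (T - u))⁻¹
            * (qPoch u)⁻¹) * qPoch T
          + (qq ^ ((s - u) * (T - u)) * (qPoch (s - u - 1))⁻¹ * (qPoch (T - u))⁻¹
            * (qPoch u)⁻¹) * qPoch T
          = (qq ^ ((s - u) * (T - u) + (s - u)) * (qPoch (s - u))⁻¹
            + qq ^ ((s - u) * (T - u)) * (qPoch (s - u - 1))⁻¹)
            * ((qPoch (T - u))⁻¹ * (qPoch u)⁻¹ * qPoch T) := by ring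
        _ = _ := by rw [hfin]; ring
    calc (∑ u ∈ range (T + 1 + 1),
        qq ^ ((s - u) * (T + 1 - u)) * (qPoch (s - u))⁻¹ * (qPoch (T + 1 - u))⁻¹ * (qPoch u)⁻¹)
        * (qPoch s * qPoch (T + 1))
        = ((∑ u ∈ range (T + 1 + 1),
        qq ^ ((s - u) * (T + 1 - u)) * (qPoch (s - u))⁻¹ * (qPoch (T + 1 - u))⁻¹ * (qPoch u)⁻¹)
        * qPoch (T + 1)) * qPoch s := by ring
      _ = ((∑ u ∈ range (T + 1),
        qq ^ ((s - u) * (T - u)) * (qPoch (s - u))⁻¹ * (qPoch (T - u))⁻¹ * (qPoch u)⁻¹)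
        * qPoch T) * qPoch s := by rw [key]
      _ = (∑ u ∈ range (T + 1),
        qq ^ ((s - u) * (T - u)) * (qPoch (s - u))⁻¹ * (qPoch (T - u))⁻¹ * (qPoch u)⁻¹)
        * (qPoch s * qPoch T) := by ring
      _ = 1 := ih s hTs

lemma durfee_le (s T : ℕ) (h : T ≤ s) :
    (∑ u ∈ range (T + 1),
      qq ^ ((s - u) * (T - u)) * (qPoch (s - u))⁻¹ * (qPoch (T - u))⁻¹ * (qPoch u)⁻¹)
    = (qPoch s)⁻¹ * (qPoch T)⁻¹ := by
  apply mul_right_cancel₀ (mul_ne_zero (qPoch_ne_zero s) (qPoch_ne_zero T))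
  rw [durfee_cleared T s h]
  calc (1 : PowerSeries ℚ) = 1 * 1 := by ring
    _ = (qPoch s * (qPoch s)⁻¹) * (qPoch T * (qPoch T)⁻¹) := by
        rw [qPoch_mul_inv, qPoch_mul_inv]
    _ = (qPoch s)⁻¹ * (qPoch T)⁻¹ * (qPoch s * qPoch T) := by ring

lemma durfee_min (s T : ℕ) :
    (∑ u ∈ range (min s T + 1),
      qq ^ ((s - u) * (T - u)) * (qPoch (s - u))⁻¹ * (qPoch (T - u))⁻¹ * (qPoch u)⁻¹)
    = (qPoch s)⁻¹ * (qPoch T)⁻¹ := by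
  rcases le_total T s with h | h
  · rw [min_eq_right h]; exact durfee_le s T h
  · rw [min_eq_left h, mul_comm, ← durfee_le T s h]
    apply Finset.sum_congr rfl
    intro u _
    rw [Nat.mul_comm (s - u)]
    ring

lemma exp_arith (n t u : ℕ) (h : 2*t + 3*u ≤ n) :
    (n - 2*t - 3*u) * (n - 2*t - 3*u + 1)/2 + t*(t+1) + 3*(u*(u+1)/2)
      + (n - 2*t - 3*u)*t + (n - 2*t - 3*u)*u + 2*(t*u)
    = (n - 2*(t+u)) * (n - 2*(t+u) + 1)/2 + (t+u)*(t+u+1) + (n - 2*t - 3*u)*t := by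
  set a := n - 2*t - 3*u with ha
  have h1 : n - 2*(t+u) = a + u := by omega
  rw [h1]
  obtain ⟨x, hx⟩ := Nat.even_mul_succ_self a
  obtain ⟨y, hy⟩ := Nat.even_mul_succ_self u
  have h4 : (a+u) * (a+u+1) = a*(a+1) + u*(u+1) + 2*(a*u) := by ring
  have h5 : (t+u) * (t+u+1) = t*(t+1) + u*(u+1) + 2*(t*u) := by ring
  rw [h4, h5, hx, hy]
  clear h4 h5 hx hy h1 ha h
  generalize t*(t+1) = P
  generalize a*t = Q
  generalize a*u = R
  generalize t*u = S
  omega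

/-- `f_n = ∑_{t=0}^{⌊n/2⌋} q^{(n-2t)(n-2t+1)/2 + t(t+1)} / ((q;q)_{n-2t} (q;q)_t)`. -/
theorem fcoef_eq (n : ℕ) :
    fcoef n = ∑ t ∈ Finset.range (n / 2 + 1),
      qq ^ ((n - 2 * t) * (n - 2 * t + 1) / 2 + t * (t + 1)) *
        (qPoch (n - 2 * t))⁻¹ * (qPoch t)⁻¹ := by
  have hR : ∀ T ∈ range (n / 2 + 1),
      qq ^ ((n - 2 * T) * (n - 2 * T + 1) / 2 + T * (T + 1)) *
        (qPoch (n - 2 * T))⁻¹ * (qPoch T)⁻¹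
      = ∑ u ∈ range (n / 2 + 1),
          if u ≤ T ∧ 2 * T + u ≤ n then
            qq ^ ((n - 2 * T) * (n - 2 * T + 1) / 2 + T * (T + 1) +
                (n - 2 * T - u) * (T - u)) *
              (qPoch (n - 2 * T - u))⁻¹ * (qPoch (T - u))⁻¹ * (qPoch u)⁻¹
          else 0 := by
    intro T hT
    rw [Finset.mem_range] at hT
    have hfs : Finset.filter (fun u => u ≤ T ∧ 2 * T + u ≤ n) (range (n / 2 + 1))
        = range (min (n - 2 * T) T + 1) := by
      ext u
      simp only [Finset.mem_filter, Finset.mem_range, Nat.lt_succ_iff, le_min_iff]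
      omega
    rw [← Finset.sum_filter, hfs, mul_assoc, ← durfee_min (n - 2 * T) T, Finset.mul_sum]
    apply Finset.sum_congr rfl
    intro u _
    rw [pow_add]
    ring
  rw [Finset.sum_congr rfl hR]
  unfold fcoef
  rw [← Finset.sum_product', ← Finset.sum_filter, ← Finset.sum_product', ← Finset.sum_filter]
  apply Finset.sum_nbij' (fun p => (p.1 + p.2, p.2)) (fun p => (p.1 - p.2, p.2))
  · intro p hp
    simp only [Finset.mem_filter, Finset.mem_product, Finset.mem_range, Nat.lt_succ_iff] at hp ⊢
    omega
  · intro p hp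
    simp only [Finset.mem_filter, Finset.mem_product, Finset.mem_range, Nat.lt_succ_iff] at hp ⊢
    omega
  · intro p hp
    obtain ⟨t, u⟩ := p
    simp only [Finset.mem_filter, Finset.mem_product, Finset.mem_range, Nat.lt_succ_iff] at hp
    dsimp only
    simp only [Prod.mk.injEq]
    constructor
    · omega
    · trivial
  · intro p hp
    obtain ⟨t, u⟩ := p
    simp only [Finset.mem_filter, Finset.mem_product, Finset.mem_range, Nat.lt_succ_iff] at hp
    dsimp only
    simp only [Prod.mk.injEq]
    constructor
    · omega
    · trivial
  · intro p hp
    simp only [Finset.mem_filter, Finset.mem_product, Finset.mem_range, Nat.lt_succ_iff] at hp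
    obtain ⟨t, u⟩ := p
    obtain ⟨-, hle⟩ := hp
    dsimp only
    have h1 : n - 2 * (t + u) - u = n - 2 * t - 3 * u := by omega
    have h2 : t + u - u = t := by omega
    rw [h1, h2]
    have he : (n - 2 * t - 3 * u) * (n - 2 * t - 3 * u + 1) / 2 + t * (t + 1) +
          3 * (u * (u + 1) / 2) + (n - 2 * t - 3 * u) * t +
          (n - 2 * t - 3 * u) * u + 2 * t * u
        = (n - 2 * (t + u)) * (n - 2 * (t + u) + 1) / 2 + (t + u) * (t + u + 1) +
          (n - 2 * t - 3 * u) * t := by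
      have := exp_arith n t u (by omega)
      calc _ = (n - 2*t - 3*u) * (n - 2*t - 3*u + 1)/2 + t*(t+1) + 3*(u*(u+1)/2)
            + (n - 2*t - 3*u)*t + (n - 2*t - 3*u)*u + 2*(t*u) := by ring
        _ = _ := this
    rw [he]
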